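/- arXiv:1402.0818 — 2 statements merged into one kernel-verified Lean document; each statement's English description precedes it below -/
import Mathlib

section
/- Let X and Y be nontrivial Banach spaces. Then the ℓ_1-sum X ⊕_1 Y is never ASQ. Concretely, for x ∈ S_X and y ∈ S_Y, the unit vectors z_1 = (−x/3, 2y/3) and z_2 = (2x/3, −y/3) have the property that there is no w ∈ S_{X⊕_1 Y} with ‖z_i + w‖ ≤ 1 + 1/9 and ‖z_i − w‖ ≤ 1 + 1/9 for i = 1, 2. -/
/-- A Banach space is almost square (ASQ). -/
def IsASQ (Z : Type*) [NormedAddCommGroup Z] [NormedSpace ℝ Z] : Prop :=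
  ∀ S : Finset Z, (∀ z ∈ S, ‖z‖ = 1) → ∀ ε : ℝ, 0 < ε →
    ∃ w : Z, ‖w‖ = 1 ∧ ∀ z ∈ S, ‖z + w‖ ≤ 1 + ε ∧ ‖z - w‖ ≤ 1 + ε

private lemma norm_one_sum {X Y : Type*} [NormedAddCommGroup X] [NormedAddCommGroup Y]
    (f : WithLp 1 (X × Y)) : ‖f‖ = ‖f.fst‖ + ‖f.snd‖ := by
  rw [WithLp.prod_norm_eq_add (by norm_num)]
  norm_num

private lemma two_norm_le {Z : Type*} [NormedAddCommGroup Z] [NormedSpace ℝ Z] (u v : Z) :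
    2 * ‖v‖ ≤ ‖u + v‖ + ‖u - v‖ := by
  have : (2 : ℝ) * ‖v‖ = ‖(u + v) - (u - v)‖ := by
    rw [show (u + v) - (u - v) = v + v by abel, ← two_smul ℝ v, norm_smul]
    norm_num
  rw [this]
  exact norm_sub_le _ _

theorem stmt_15 (X Y : Type*) [NormedAddCommGroup X] [NormedSpace ℝ X] [CompleteSpace X]
    [NormedAddCommGroup Y] [NormedSpace ℝ Y] [CompleteSpace Y]
    (x : X) (y : Y) (hx : ‖x‖ = 1) (hy : ‖y‖ = 1)
    (z₁ z₂ : WithLp 1 (X × Y))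
    (hz₁ : z₁ = (WithLp.equiv 1 (X × Y)).symm (-(1/3 : ℝ) • x, (2/3 : ℝ) • y))
    (hz₂ : z₂ = (WithLp.equiv 1 (X × Y)).symm ((2/3 : ℝ) • x, -(1/3 : ℝ) • y)) :
    ¬ IsASQ (WithLp 1 (X × Y)) ∧
      ¬ ∃ w : WithLp 1 (X × Y), ‖w‖ = 1 ∧
        ‖z₁ + w‖ ≤ 1 + 1/9 ∧ ‖z₁ - w‖ ≤ 1 + 1/9 ∧
        ‖z₂ + w‖ ≤ 1 + 1/9 ∧ ‖z₂ - w‖ ≤ 1 + 1/9 := by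
  have h1 : z₁.fst = -(1/3 : ℝ) • x := by rw [hz₁]; rfl
  have h2 : z₁.snd = (2/3 : ℝ) • y := by rw [hz₁]; rfl
  have h3 : z₂.fst = (2/3 : ℝ) • x := by rw [hz₂]; rfl
  have h4 : z₂.snd = -(1/3 : ℝ) • y := by rw [hz₂]; rfl
  have hnz₁ : ‖z₁‖ = 1 := by
    rw [norm_one_sum, h1, h2, norm_smul, norm_smul, hx, hy]
    norm_num
  have hnz₂ : ‖z₂‖ = 1 := by
    rw [norm_one_sum, h3, h4, norm_smul, norm_smul, hx, hy]
    norm_num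
  have key : ¬ ∃ w : WithLp 1 (X × Y), ‖w‖ = 1 ∧
        ‖z₁ + w‖ ≤ 1 + 1/9 ∧ ‖z₁ - w‖ ≤ 1 + 1/9 ∧
        ‖z₂ + w‖ ≤ 1 + 1/9 ∧ ‖z₂ - w‖ ≤ 1 + 1/9 := by
    rintro ⟨w, hw, ha1, ha2, hb1, hb2⟩
    -- component decompositions
    have e1 : ‖z₁ + w‖ = ‖z₁.fst + w.fst‖ + ‖z₁.snd + w.snd‖ := norm_one_sum _
    have e2 : ‖z₁ - w‖ = ‖z₁.fst - w.fst‖ + ‖z₁.snd - w.snd‖ := norm_one_sum _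
    have e3 : ‖z₂ + w‖ = ‖z₂.fst + w.fst‖ + ‖z₂.snd + w.snd‖ := norm_one_sum _
    have e4 : ‖z₂ - w‖ = ‖z₂.fst - w.fst‖ + ‖z₂.snd - w.snd‖ := norm_one_sum _
    have ew : ‖w‖ = ‖w.fst‖ + ‖w.snd‖ := norm_one_sum _
    -- from z₁: first components give 2‖w.fst‖, second give 2‖z₁.snd‖ = 4/3
    have k1 : 2 * ‖w.fst‖ ≤ ‖z₁.fst + w.fst‖ + ‖z₁.fst - w.fst‖ := two_norm_le _ _
    have k2 : 2 * ‖z₁.snd‖ ≤ ‖z₁.snd + w.snd‖ + ‖z₁.snd - w.snd‖ := by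
      have := two_norm_le w.snd z₁.snd
      calc 2 * ‖z₁.snd‖ ≤ ‖w.snd + z₁.snd‖ + ‖w.snd - z₁.snd‖ := this
        _ = ‖z₁.snd + w.snd‖ + ‖z₁.snd - w.snd‖ := by
            rw [add_comm w.snd, ← norm_neg (w.snd - z₁.snd), neg_sub]
    have k3 : 2 * ‖w.snd‖ ≤ ‖z₂.snd + w.snd‖ + ‖z₂.snd - w.snd‖ := two_norm_le _ _
    have k4 : 2 * ‖z₂.fst‖ ≤ ‖z₂.fst + w.fst‖ + ‖z₂.fst - w.fst‖ := by
      have := two_norm_le w.fst z₂.fst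
      calc 2 * ‖z₂.fst‖ ≤ ‖w.fst + z₂.fst‖ + ‖w.fst - z₂.fst‖ := this
        _ = ‖z₂.fst + w.fst‖ + ‖z₂.fst - w.fst‖ := by
            rw [add_comm w.fst, ← norm_neg (w.fst - z₂.fst), neg_sub]
    have hs1 : ‖z₁.snd‖ = 2/3 := by rw [h2, norm_smul, hy]; norm_num
    have hs2 : ‖z₂.fst‖ = 2/3 := by rw [h3, norm_smul, hx]; norm_num
    -- sum inequalities
    have A : 2 * ‖w.fst‖ + 2 * (2/3) ≤ (1 + 1/9) + (1 + 1/9) := by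
      rw [← hs1]
      calc 2 * ‖w.fst‖ + 2 * ‖z₁.snd‖
          ≤ (‖z₁.fst + w.fst‖ + ‖z₁.fst - w.fst‖) +
            (‖z₁.snd + w.snd‖ + ‖z₁.snd - w.snd‖) := add_le_add k1 k2
        _ = ‖z₁ + w‖ + ‖z₁ - w‖ := by rw [e1, e2]; ring
        _ ≤ (1 + 1/9) + (1 + 1/9) := add_le_add ha1 ha2
    have B : 2 * ‖w.snd‖ + 2 * (2/3) ≤ (1 + 1/9) + (1 + 1/9) := by
      rw [← hs2]
      calc 2 * ‖w.snd‖ + 2 * ‖z₂.fst‖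
          ≤ (‖z₂.fst + w.fst‖ + ‖z₂.fst - w.fst‖) +
            (‖z₂.snd + w.snd‖ + ‖z₂.snd - w.snd‖) := by
              have := add_le_add k3 k4; linarith
        _ = ‖z₂ + w‖ + ‖z₂ - w‖ := by rw [e3, e4]; ring
        _ ≤ (1 + 1/9) + (1 + 1/9) := add_le_add hb1 hb2
    have : ‖w.fst‖ ≤ 4/9 := by linarith
    have : ‖w.snd‖ ≤ 4/9 := by linarith
    rw [ew] at hw
    linarith
  classical
  refine ⟨fun h => key ?_, key⟩
  obtain ⟨w, hw, hws⟩ := h {z₁, z₂} (by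
    intro z hz
    rcases Finset.mem_insert.mp hz with h | h
    · rw [h]; exact hnz₁
    · rw [Finset.mem_singleton.mp h]; exact hnz₂) (1/9) (by norm_num)
  have m1 := hws z₁ (Finset.mem_insert_self _ _)
  have m2 := hws z₂ (Finset.mem_insert_of_mem (Finset.mem_singleton_self _))
  exact ⟨w, hw, m1.1, m1.2, m2.1, m2.2⟩
end

section
/- Let X and Y be nontrivial Banach spaces. Then X ⊕_∞ Y is ASQ if and only if X is ASQ or Y is ASQ. -/
open scoped ENNReal

lemma asq_bound {E : Type*} [NormedAddCommGroup E] [NormedSpace ℝ E] {a w : E} {ε : ℝ}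
    (ha : ‖a‖ ≤ 1) (hw : ‖w‖ = 1) (hε : 0 ≤ ε)
    (h : a ≠ 0 → ‖‖a‖⁻¹ • a + w‖ ≤ 1 + ε) : ‖a + w‖ ≤ 1 + ε := by
  rcases eq_or_ne a 0 with rfl | h0
  · rw [zero_add, hw]; linarith
  · set r := ‖a‖ with hr
    have hr0 : 0 < r := norm_pos_iff.mpr h0
    have key : a + w = r • (r⁻¹ • a + w) + (1 - r) • w := by
      rw [smul_add, smul_smul, mul_inv_cancel₀ hr0.ne', one_smul, sub_smul, one_smul]
      abel
    calc ‖a + w‖ = ‖r • (r⁻¹ • a + w) + (1 - r) • w‖ := by rw [← key]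
      _ ≤ r * (1 + ε) + (1 - r) * 1 := by
          refine (norm_add_le _ _).trans (add_le_add ?_ ?_)
          · rw [norm_smul, Real.norm_of_nonneg hr0.le]
            exact mul_le_mul_of_nonneg_left (h h0) hr0.le
          · rw [norm_smul, Real.norm_of_nonneg (by linarith), hw]
      _ = 1 + r * ε := by ring
      _ ≤ 1 + ε := by nlinarith

lemma asq_unit_mem {E : Type*} [NormedAddCommGroup E] [NormedSpace ℝ E] {a : E}
    (h0 : a ≠ 0) : ‖‖a‖⁻¹ • a‖ = 1 := by
  have : ‖a‖ ≠ 0 := norm_ne_zero_iff.mpr h0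
  rw [norm_smul, norm_inv, norm_norm, inv_mul_cancel₀ this]

lemma isASQ_prod_left {X Y : Type*} [NormedAddCommGroup X] [NormedSpace ℝ X]
    [NormedAddCommGroup Y] [NormedSpace ℝ Y] (hX : IsASQ X) :
    IsASQ (WithLp ∞ (X × Y)) := by
  classical
  intro S hS ε hε
  set T : Finset X := Finset.image (fun z : WithLp ∞ (X × Y) => ‖z.fst‖⁻¹ • z.fst)
    (S.filter fun z => z.fst ≠ 0) with hT
  have hTunit : ∀ t ∈ T, ‖t‖ = 1 := by
    intro t ht
    simp only [hT, Finset.mem_image, Finset.mem_filter] at ht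
    obtain ⟨z, ⟨_, hz0⟩, rfl⟩ := ht
    exact asq_unit_mem hz0
  obtain ⟨w, hw1, hw⟩ := hX T hTunit ε hε
  refine ⟨(WithLp.equiv ∞ (X × Y)).symm (w, 0), ?_, ?_⟩
  · rw [WithLp.prod_norm_eq_sup]
    simp [hw1]
  · intro z hz
    have hz1 : ‖z.fst‖ ≤ 1 := by
      rw [← hS z hz, WithLp.prod_norm_eq_sup]; exact le_max_left _ _
    have hz2 : ‖z.snd‖ ≤ 1 := by
      rw [← hS z hz, WithLp.prod_norm_eq_sup]; exact le_max_right _ _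
    have hmem : z.fst ≠ 0 → ∀ u : X, ‖u‖ = 1 → (‖‖z.fst‖⁻¹ • z.fst + u‖ ≤ 1 + ε ∧
        ‖‖z.fst‖⁻¹ • z.fst - u‖ ≤ 1 + ε) → True := fun _ _ _ _ => trivial
    have hTin : z.fst ≠ 0 → (‖z.fst‖⁻¹ • z.fst) ∈ T := by
      intro h0
      simp only [hT, Finset.mem_image, Finset.mem_filter]
      exact ⟨z, ⟨hz, h0⟩, rfl⟩
    constructor
    · rw [WithLp.prod_norm_eq_sup]
      refine max_le ?_ ?_
      · exact asq_bound hz1 hw1 hε.le (fun h0 => (hw _ (hTin h0)).1)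
      · show ‖z.snd + 0‖ ≤ 1 + ε
        rw [add_zero]; linarith
    · rw [WithLp.prod_norm_eq_sup]
      refine max_le ?_ ?_
      · show ‖z.fst - w‖ ≤ 1 + ε
        have : ‖(-w)‖ = 1 := by rw [norm_neg, hw1]
        have := asq_bound hz1 this hε.le (fun h0 => by
          have h := (hw _ (hTin h0)).2
          rw [sub_eq_add_neg] at h
          exact h)
        rwa [← sub_eq_add_neg] at this
      · show ‖z.snd - 0‖ ≤ 1 + ε
        rw [sub_zero]; linarith

lemma isASQ_prod_right {X Y : Type*} [NormedAddCommGroup X] [NormedSpace ℝ X]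
    [NormedAddCommGroup Y] [NormedSpace ℝ Y] (hY : IsASQ Y) :
    IsASQ (WithLp ∞ (X × Y)) := by
  classical
  intro S hS ε hε
  set T : Finset Y := Finset.image (fun z : WithLp ∞ (X × Y) => ‖z.snd‖⁻¹ • z.snd)
    (S.filter fun z => z.snd ≠ 0) with hT
  have hTunit : ∀ t ∈ T, ‖t‖ = 1 := by
    intro t ht
    simp only [hT, Finset.mem_image, Finset.mem_filter] at ht
    obtain ⟨z, ⟨_, hz0⟩, rfl⟩ := ht
    exact asq_unit_mem hz0
  obtain ⟨w, hw1, hw⟩ := hY T hTunit ε hε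
  refine ⟨(WithLp.equiv ∞ (X × Y)).symm (0, w), ?_, ?_⟩
  · rw [WithLp.prod_norm_eq_sup]
    simp [hw1]
  · intro z hz
    have hz1 : ‖z.fst‖ ≤ 1 := by
      rw [← hS z hz, WithLp.prod_norm_eq_sup]; exact le_max_left _ _
    have hz2 : ‖z.snd‖ ≤ 1 := by
      rw [← hS z hz, WithLp.prod_norm_eq_sup]; exact le_max_right _ _
    have hTin : z.snd ≠ 0 → (‖z.snd‖⁻¹ • z.snd) ∈ T := by
      intro h0
      simp only [hT, Finset.mem_image, Finset.mem_filter]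
      exact ⟨z, ⟨hz, h0⟩, rfl⟩
    constructor
    · rw [WithLp.prod_norm_eq_sup]
      refine max_le ?_ ?_
      · show ‖z.fst + 0‖ ≤ 1 + ε
        rw [add_zero]; linarith
      · exact asq_bound hz2 hw1 hε.le (fun h0 => (hw _ (hTin h0)).1)
    · rw [WithLp.prod_norm_eq_sup]
      refine max_le ?_ ?_
      · show ‖z.fst - 0‖ ≤ 1 + ε
        rw [sub_zero]; linarith
      · show ‖z.snd - w‖ ≤ 1 + ε
        have hnw : ‖(-w)‖ = 1 := by rw [norm_neg, hw1]
        have := asq_bound hz2 hnw hε.le (fun h0 => by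
          have h := (hw _ (hTin h0)).2
          rw [sub_eq_add_neg] at h
          exact h)
        rwa [← sub_eq_add_neg] at this

theorem stmt_17 (X Y : Type*) [NormedAddCommGroup X] [NormedSpace ℝ X] [CompleteSpace X]
    [NormedAddCommGroup Y] [NormedSpace ℝ Y] [CompleteSpace Y]
    [Nontrivial X] [Nontrivial Y] :
    IsASQ (WithLp ∞ (X × Y)) ↔ (IsASQ X ∨ IsASQ Y) := by
  classical
  constructor
  · intro hZ
    by_contra hcon
    push_neg at hcon
    obtain ⟨hX, hY⟩ := hcon
    simp only [IsASQ, not_forall] at hX hY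
    obtain ⟨Sx, hSx, εx, hεx, hx⟩ := hX
    obtain ⟨Sy, hSy, εy, hεy, hy⟩ := hY
    push_neg at hx hy
    -- Sx and Sy are nonempty
    obtain ⟨x0, hx0⟩ := exists_norm_eq X (zero_le_one)
    obtain ⟨y0, hy0⟩ := exists_norm_eq Y (zero_le_one)
    obtain ⟨xa, hxmem, -⟩ := hx x0 hx0
    obtain ⟨ya, hymem, -⟩ := hy y0 hy0
    set SZ : Finset (WithLp ∞ (X × Y)) :=
      Finset.image (WithLp.equiv ∞ (X × Y)).symm (Sx ×ˢ Sy) with hSZ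
    have hSZunit : ∀ z ∈ SZ, ‖z‖ = 1 := by
      intro z hz
      simp only [hSZ, Finset.mem_image, Finset.mem_product] at hz
      obtain ⟨⟨a, b⟩, ⟨ha, hb⟩, rfl⟩ := hz
      rw [WithLp.prod_norm_eq_sup]
      show max ‖a‖ ‖b‖ = 1
      rw [hSx a ha, hSy b hb, max_self]
    set ε := min εx εy with hε
    have hεpos : 0 < ε := lt_min hεx hεy
    obtain ⟨w, hw1, hw⟩ := hZ SZ hSZunit ε hεpos
    rw [WithLp.prod_norm_eq_sup] at hw1
    rcases max_choice ‖w.fst‖ ‖w.snd‖ with hc | hc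
    · -- ‖w.fst‖ = 1
      rw [hc] at hw1
      obtain ⟨x, hxS, hxbad⟩ := hx w.fst hw1
      have hz : (WithLp.equiv ∞ (X × Y)).symm (x, ya) ∈ SZ := by
        simp only [hSZ, Finset.mem_image, Finset.mem_product]
        exact ⟨(x, ya), ⟨hxS, hymem⟩, rfl⟩
      obtain ⟨h1, h2⟩ := hw _ hz
      rw [WithLp.prod_norm_eq_sup] at h1 h2
      have e1 : ((WithLp.equiv ∞ (X × Y)).symm (x, ya) + w).fst = x + w.fst := rfl
      have e2 : ((WithLp.equiv ∞ (X × Y)).symm (x, ya) - w).fst = x - w.fst := rfl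
      rw [e1] at h1; rw [e2] at h2
      have b1 : ‖x + w.fst‖ ≤ 1 + ε := le_trans (le_max_left _ _) h1
      have b2 : ‖x - w.fst‖ ≤ 1 + ε := le_trans (le_max_left _ _) h2
      have hεx' : ε ≤ εx := min_le_left _ _
      linarith [hxbad (by linarith)]
    · rw [hc] at hw1
      obtain ⟨y, hyS, hybad⟩ := hy w.snd hw1
      have hz : (WithLp.equiv ∞ (X × Y)).symm (xa, y) ∈ SZ := by
        simp only [hSZ, Finset.mem_image, Finset.mem_product]
        exact ⟨(xa, y), ⟨hxmem, hyS⟩, rfl⟩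
      obtain ⟨h1, h2⟩ := hw _ hz
      rw [WithLp.prod_norm_eq_sup] at h1 h2
      have e1 : ((WithLp.equiv ∞ (X × Y)).symm (xa, y) + w).snd = y + w.snd := rfl
      have e2 : ((WithLp.equiv ∞ (X × Y)).symm (xa, y) - w).snd = y - w.snd := rfl
      rw [e1] at h1; rw [e2] at h2
      have b1 : ‖y + w.snd‖ ≤ 1 + ε := le_trans (le_max_right _ _) h1
      have b2 : ‖y - w.snd‖ ≤ 1 + ε := le_trans (le_max_right _ _) h2
      have hεy' : ε ≤ εy := min_le_right _ _
      linarith [hybad (by linarith)]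
  · rintro (hX | hY)
    · exact isASQ_prod_left hX
    · exact isASQ_prod_right hY
end
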